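/- For binary codes (q=2), no positive-rate family of codes can be list-decoded from any combination of δn deletions and γn insertions with 2δ + γ ≥ 1: by time-sharing between the attack that deletes the less frequent bit (δ = 1/2, γ = 0) and the attack that inserts bits to produce (01)ⁿ (δ = 0, γ = 1), an adversary with budget (γ, δ) satisfying 2δ + γ = 1 can map all codewords in a positive-density subset to a common string. -/

import Mathlib

variable {α : Type*}

/-- Insertion-deletion edit distance. -/
def ED [DecidableEq α] : List α → List α → ℕ
  | [], ys => ys.length
  | _ :: xs, [] => xs.length + 1
  | x :: xs, y :: ys =>
    if x = y then ED xs ys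
    else 1 + min (ED (x :: xs) ys) (ED xs (y :: ys))
termination_by xs ys => xs.length + ys.length
decreasing_by all_goals (simp; try omega)

/-- Length of longest common subsequence. -/
def LCSlen [DecidableEq α] : List α → List α → ℕ
  | [], _ => 0
  | _ :: _, [] => 0
  | x :: xs, y :: ys =>
    if x = y then 1 + LCSlen xs ys
    else max (LCSlen (x :: xs) ys) (LCSlen xs (y :: ys))
termination_by xs ys => xs.length + ys.length
decreasing_by all_goals (simp; try omega)

/-- substring S[i, j) of an (infinite) string -/
def sub (S : ℕ → α) (i j : ℕ) : List α := (List.range' i (j - i)).map S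

def IsSyncString [DecidableEq α] (ε : ℝ) (n : ℕ) (S : ℕ → α) : Prop :=
  ∀ i j k : ℕ, i < j → j < k → k ≤ n →
    (1 - ε) * ((k : ℝ) - i) < ED (sub S i j) (sub S j k)

def ReachableR (c y : List α) (D G : ℝ) : Prop :=
  ∃ z : List α, z.Sublist c ∧ z.Sublist y ∧
    (c.length : ℝ) - z.length ≤ D ∧ (y.length : ℝ) - z.length ≤ G

def altL : ℕ → List Bool
  | 0 => []
  | m+1 => false :: true :: altL m

lemma altL_length (m : ℕ) : (altL m).length = 2*m := by
  induction m with
  | zero => rfl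
  | succ m ih => simp [altL, ih]; omega

lemma sublist_altL : ∀ (m : ℕ) (s : List Bool), s.length ≤ m → s.Sublist (altL m)
  | 0, s, hs => by
    have : s = [] := List.eq_nil_of_length_eq_zero (Nat.le_zero.mp hs)
    simp [this]
  | m+1, [], _ => List.nil_sublist _
  | m+1, a :: t, hs => by
    have ht : t.length ≤ m := by simpa using hs
    have ih := sublist_altL m t ht
    cases a with
    | false => exact (ih.cons true).cons₂ false
    | true => exact ((ih.cons₂ true).cons false)

/-- Binary list decoding is impossible at `2δ + γ = 1`: with `D = δn` deletions and
`G = γn` insertions (`2D + G = n`), a time-sharing adversary maps every codeword to one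
of only two strings, so any `L`-list-decodable code has at most `2L` codewords. -/
theorem stmt7 (n D G L : ℕ) (hn : 0 < n) (δ γ : ℝ)
    (hδ : (D : ℝ) = δ * n) (hγ : (G : ℝ) = γ * n) (hshare : 2 * δ + γ = 1)
    (hDG : 2 * D + G = n)
    (C : Finset (List Bool)) (hlen : ∀ c ∈ C, c.length = n)
    (hld : ∀ y : List Bool,
      Nat.card {c : List Bool // c ∈ C ∧ ReachableR c y (δ * n) (γ * n)} ≤ L) :
    C.card ≤ 2 * L := by
  classical
  set y : Bool → List Bool := fun b => List.replicate D b ++ altL G with hy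
  have key : ∀ c ∈ C, ∃ b, ReachableR c (y b) (δ * n) (γ * n) := by
    intro c hc
    have hcl : c.length = n := hlen c hc
    have htl : (c.take (2*D)).length = 2*D := by
      rw [List.length_take]; omega
    have hdl : (c.drop (2*D)).length = G := by
      rw [List.length_drop]; omega
    obtain ⟨b, hb⟩ : ∃ b, D ≤ (c.take (2*D)).count b := by
      by_contra h
      push_neg at h
      have h1 := h true
      have h2 := h false
      have := List.count_true_add_count_false (c.take (2*D))
      omega
    refine ⟨b, List.replicate D b ++ c.drop (2*D), ?_, ?_, ?_, ?_⟩
    · have h1 : (List.replicate D b).Sublist (c.take (2*D)) :=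
        (List.replicate_sublist_iff).mpr hb
      have := h1.append (List.Sublist.refl (c.drop (2*D)))
      rwa [List.take_append_drop] at this
    · exact (List.Sublist.refl _).append (sublist_altL G _ (le_of_eq hdl))
    · have hR : 2*(D:ℝ) + G = n := by exact_mod_cast hDG
      simp only [List.length_append, List.length_replicate, hdl, hcl]
      rw [← hδ]; push_cast; linarith
    · have hR : 2*(D:ℝ) + G = n := by exact_mod_cast hDG
      simp only [hy, List.length_append, List.length_replicate, hdl, altL_length]
      rw [← hγ]; push_cast; linarith
  have bound : ∀ yy : List Bool,
      (C.filter (fun c => ReachableR c yy (δ * n) (γ * n))).card ≤ L := by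
    intro yy
    have e : {c : List Bool // c ∈ C ∧ ReachableR c yy (δ * n) (γ * n)} ≃
        {c : List Bool // c ∈ C.filter (fun c => ReachableR c yy (δ * n) (γ * n))} :=
      Equiv.subtypeEquivRight (by simp [Finset.mem_filter])
    calc (C.filter (fun c => ReachableR c yy (δ * n) (γ * n))).card
        = Nat.card {c : List Bool // c ∈ C ∧ ReachableR c yy (δ * n) (γ * n)} := by
          rw [Nat.card_congr e, Nat.card_eq_finsetCard]
      _ ≤ L := hld yy
  have hsub : C ⊆ C.filter (fun c => ReachableR c (y true) (δ * n) (γ * n)) ∪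
      C.filter (fun c => ReachableR c (y false) (δ * n) (γ * n)) := by
    intro c hc
    obtain ⟨b, hb⟩ := key c hc
    cases b <;> simp [Finset.mem_union, Finset.mem_filter, hc, hb]
  calc C.card ≤ _ := Finset.card_le_card hsub
    _ ≤ _ + _ := Finset.card_union_le _ _
    _ ≤ 2 * L := by have := bound (y true); have := bound (y false); omega
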